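/- Let R be a valuation ring, W an infinite set with nonprincipal ultrafilter 𝒰, Rᵤ the ultrapower of R, Γᵤ the ultrapower of the value group Γ. Let αᵤ ∈ Γᵤ⁺ be represented by a family (α_w) ∈ (Γ⁺)^W. Then the canonical surjection R^W → ∏_{w∈W} R/I_{α_w} induces a ring isomorphism Rᵤ/I_{αᵤ} ≅ ulim_{𝒰,w} R/I_{α_w}, where I_{αᵤ} = {x ∈ Rᵤ | ordᵤ(x) ≥ αᵤ} and the right side is the ultraproduct of the quotients R/I_{α_w}. -/

import Mathlib

open Filter

section Setup

variable {R : Type*} [CommRing R] [IsDomain R] [ValuationRing R]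
  {Γ : Type*} [AddCommGroup Γ] [LinearOrder Γ] [IsOrderedAddMonoid Γ]

/-- The ideal `I_γ = {x ∈ R | ord x ≥ γ}` of a valuation ring `R` with (nonnegative)
additive valuation `v`. -/
def valIdeal (v : AddValuation R (WithTop Γ)) (hnn : ∀ x : R, 0 ≤ v x) (γ : Γ) :
    Ideal R where
  carrier := {x | (γ : WithTop Γ) ≤ v x}
  zero_mem' := by simp [v.map_zero]
  add_mem' := by
    intro a b ha hb
    exact le_trans (le_min ha hb) (v.map_add a b)
  smul_mem' := by
    intro c x hx
    have h : v (c * x) = v c + v x := v.map_mul c x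
    have : (γ : WithTop Γ) ≤ v c + v x := le_add_of_nonneg_left (hnn c) |>.trans' hx
    simpa [smul_eq_mul, h] using this

variable {W : Type*} (𝒰 : Ultrafilter W)

/-- The ideal of families vanishing `𝒰`-almost everywhere, defining the ultraproduct
of the family of rings `(Q w)`. -/
def aeZeroIdeal (Q : W → Type*) [∀ w, CommRing (Q w)] : Ideal (Π w, Q w) where
  carrier := {f | ∀ᶠ w in (𝒰 : Filter W), f w = 0}
  zero_mem' := Eventually.of_forall fun _ => rfl
  add_mem' := fun ha hb => (ha.and hb).mono fun _ h => by simp [h.1, h.2]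
  smul_mem' := fun c _ h => h.mono fun _ hw => by simp [hw]

/-- The ideal `I_{αᵤ} = {x ∈ Rᵤ | ordᵤ x ≥ αᵤ}` of the ultrapower `Rᵤ`, where
`αᵤ = [α_w]` is given by the family `(α_w)`. -/
def germValIdeal (v : AddValuation R (WithTop Γ)) (hnn : ∀ x : R, 0 ≤ v x) (α : W → Γ) :
    Ideal (Germ (𝒰 : Filter W) R) where
  carrier := {x | ∃ f : W → R, x = (↑f : Germ (𝒰 : Filter W) R) ∧
    ∀ᶠ w in (𝒰 : Filter W), (α w : WithTop Γ) ≤ v (f w)}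
  zero_mem' := ⟨0, by simp, Eventually.of_forall fun w => by simp [v.map_zero]⟩
  add_mem' := by
    rintro a b ⟨f, rfl, hf⟩ ⟨g, rfl, hg⟩
    exact ⟨f + g, by simp, (hf.and hg).mono fun w h =>
      le_trans (le_min h.1 h.2) (v.map_add (f w) (g w))⟩
  smul_mem' := by
    intro c x hx
    induction c using Filter.Germ.inductionOn with
    | h h =>
      obtain ⟨f, rfl, hf⟩ := hx
      refine ⟨h * f, by simp, hf.mono fun w hw => ?_⟩
      have hmul : v (h w * f w) = v (h w) + v (f w) := v.map_mul _ _
      have : (α w : WithTop Γ) ≤ v (h w) + v (f w) :=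
        (le_add_of_nonneg_left (hnn (h w))).trans' hw
      simpa [hmul] using this

/-- The canonical ring hom `R^W → (∏_w R/I_{α_w}) / aeZeroIdeal`. -/
def Phi (v : AddValuation R (WithTop Γ)) (hnn : ∀ x : R, 0 ≤ v x) (α : W → Γ) :
    (Π _ : W, R) →+*
      ((Π w, R ⧸ valIdeal v hnn (α w)) ⧸ aeZeroIdeal 𝒰 (fun w => R ⧸ valIdeal v hnn (α w))) :=
  (Ideal.Quotient.mk _).comp
    (Pi.ringHom fun w => (Ideal.Quotient.mk (valIdeal v hnn (α w))).comp (Pi.evalRingHom _ w))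

theorem Phi_apply (v : AddValuation R (WithTop Γ)) (hnn : ∀ x : R, 0 ≤ v x) (α : W → Γ)
    (f : W → R) :
    Phi 𝒰 v hnn α f =
      Ideal.Quotient.mk _ (fun w => Ideal.Quotient.mk (valIdeal v hnn (α w)) (f w)) := rfl

theorem Phi_congr (v : AddValuation R (WithTop Γ)) (hnn : ∀ x : R, 0 ≤ v x) (α : W → Γ)
    {f g : W → R} (h : f =ᶠ[(𝒰 : Filter W)] g) :
    Phi 𝒰 v hnn α f = Phi 𝒰 v hnn α g := by
  rw [Phi_apply, Phi_apply, Ideal.Quotient.eq]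
  exact h.mono fun w hw => by simp [hw]

/-- The ring hom `Rᵤ → (∏_w R/I_{α_w}) / aeZeroIdeal` induced by `Phi`. -/
def PhiGerm (v : AddValuation R (WithTop Γ)) (hnn : ∀ x : R, 0 ≤ v x) (α : W → Γ) :
    Germ (𝒰 : Filter W) R →+*
      ((Π w, R ⧸ valIdeal v hnn (α w)) ⧸ aeZeroIdeal 𝒰 (fun w => R ⧸ valIdeal v hnn (α w))) where
  toFun x := Germ.liftOn x (fun f => Phi 𝒰 v hnn α f) fun _ _ h => Phi_congr 𝒰 v hnn α h
  map_one' := map_one (Phi 𝒰 v hnn α)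
  map_zero' := map_zero (Phi 𝒰 v hnn α)
  map_mul' x y := by
    induction x using Filter.Germ.inductionOn with
    | h f =>
      induction y using Filter.Germ.inductionOn with
      | h g => exact map_mul (Phi 𝒰 v hnn α) f g
  map_add' x y := by
    induction x using Filter.Germ.inductionOn with
    | h f =>
      induction y using Filter.Germ.inductionOn with
      | h g => exact map_add (Phi 𝒰 v hnn α) f g

theorem PhiGerm_coe (v : AddValuation R (WithTop Γ)) (hnn : ∀ x : R, 0 ≤ v x) (α : W → Γ)
    (f : W → R) :
    PhiGerm 𝒰 v hnn α (↑f : Germ (𝒰 : Filter W) R) = Phi 𝒰 v hnn α f := rfl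

end Setup

/-- Moret-Bailly, 2.3.1: for a valuation ring `R` with additive valuation `v` and a family
`(α_w)` of nonnegative values representing `αᵤ ∈ Γᵤ⁺`, the canonical surjection
`R^W → ∏_w R/I_{α_w}` induces a ring isomorphism `Rᵤ/I_{αᵤ} ≅ ulim_w R/I_{α_w}`. -/
theorem germ_quotient_iso_ultraproduct_of_quotients
    (R : Type*) [CommRing R] [IsDomain R] [ValuationRing R]
    (Γ : Type*) [AddCommGroup Γ] [LinearOrder Γ] [IsOrderedAddMonoid Γ]
    (v : AddValuation R (WithTop Γ)) (hnn : ∀ x : R, 0 ≤ v x)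
    (W : Type*) [Infinite W] (𝒰 : Ultrafilter W) (h𝒰 : ∀ w : W, 𝒰 ≠ pure w)
    (α : W → Γ) (hα : ∀ w, 0 ≤ α w) :
    ∃ e : (Germ (𝒰 : Filter W) R ⧸ germValIdeal 𝒰 v hnn α) ≃+*
        ((Π w, R ⧸ valIdeal v hnn (α w)) ⧸ aeZeroIdeal 𝒰 (fun w => R ⧸ valIdeal v hnn (α w))),
      ∀ f : W → R,
        e (Ideal.Quotient.mk (germValIdeal 𝒰 v hnn α) (↑f : Germ (𝒰 : Filter W) R)) =
          Ideal.Quotient.mk _ (fun w => Ideal.Quotient.mk (valIdeal v hnn (α w)) (f w)) := by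
  have hker : ∀ x ∈ germValIdeal 𝒰 v hnn α, PhiGerm 𝒰 v hnn α x = 0 := by
    rintro x ⟨f, rfl, hf⟩
    rw [PhiGerm_coe, Phi_apply, Ideal.Quotient.eq_zero_iff_mem]
    exact hf.mono fun w hw => by
      simpa [Ideal.Quotient.eq_zero_iff_mem] using (show f w ∈ valIdeal v hnn (α w) from hw)
  set e0 := Ideal.Quotient.lift (germValIdeal 𝒰 v hnn α) (PhiGerm 𝒰 v hnn α) hker with he0
  have hinj : Function.Injective e0 := by
    apply RingHom.lift_injective_of_ker_le_ideal _ hker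
    intro x hx
    rw [RingHom.mem_ker] at hx
    induction x using Filter.Germ.inductionOn with
    | h f =>
      rw [PhiGerm_coe, Phi_apply, Ideal.Quotient.eq_zero_iff_mem] at hx
      refine ⟨f, rfl, hx.mono fun w hw => ?_⟩
      exact (show f w ∈ valIdeal v hnn (α w) by simpa [Ideal.Quotient.eq_zero_iff_mem] using hw)
  have hsurj : Function.Surjective e0 := by
    intro y
    obtain ⟨q, rfl⟩ := Ideal.Quotient.mk_surjective y
    refine ⟨Ideal.Quotient.mk _ (↑(fun w => (Ideal.Quotient.mk_surjective (q w)).choose) :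
      Germ (𝒰 : Filter W) R), ?_⟩
    rw [he0, Ideal.Quotient.lift_mk, PhiGerm_coe, Phi_apply]
    congr 1
    funext w
    exact (Ideal.Quotient.mk_surjective (q w)).choose_spec
  refine ⟨RingEquiv.ofBijective e0 ⟨hinj, hsurj⟩, fun f => ?_⟩
  exact (RingEquiv.ofBijective_apply e0 _ _).trans
    (by rw [he0, Ideal.Quotient.lift_mk, PhiGerm_coe, Phi_apply])
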